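/- Let Φ be an n×N complex matrix with unit column vectors that satisfies the RIP of order m with parameter ε, where m ≥ 2. Then for every k ≥ m, Φ satisfies the RIP of order k with parameter δ = ε(k-1)/(m-1). -/

import Mathlib

open Finset

/-- `Φ` satisfies the Restricted Isometry Property of order `k` with parameter `δ`. -/
def RIP {m N : Type*} [Fintype m] [Fintype N] [DecidableEq N]
    (Φ : Matrix m N ℂ) (k : ℕ) (δ : ℝ) : Prop :=
  ∀ x : N → ℂ, (Finset.univ.filter fun i => x i ≠ 0).card ≤ k →
    (1 - δ) * ∑ i, ‖x i‖ ^ 2 ≤ ∑ a, ‖Φ.mulVec x a‖ ^ 2 ∧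
      ∑ a, ‖Φ.mulVec x a‖ ^ 2 ≤ (1 + δ) * ∑ i, ‖x i‖ ^ 2

lemma filter_superset_card {α : Type*} [DecidableEq α] {T U : Finset α} {m : ℕ}
    (hUT : U ⊆ T) (hUm : U.card ≤ m) :
    ((T.powersetCard m).filter (fun S => U ⊆ S)).card
      = (T.card - U.card).choose (m - U.card) := by
  rw [← Finset.card_sdiff_of_subset hUT, ← Finset.card_powersetCard]
  apply Finset.card_nbij' (fun S => S \ U) (fun S => S ∪ U)
  · intro S hS
    simp only [mem_coe, mem_filter, mem_powersetCard] at hS ⊢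
    obtain ⟨⟨hST, hcard⟩, hUS⟩ := hS
    refine ⟨sdiff_subset_sdiff hST (le_refl U), ?_⟩
    rw [card_sdiff_of_subset hUS, hcard]
  · intro S hS
    simp only [mem_coe, mem_filter, mem_powersetCard, mem_sdiff] at hS ⊢
    obtain ⟨hsub, hcard⟩ := hS
    have hdisj : Disjoint S U := by
      rw [Finset.disjoint_left]; intro a ha; exact ((mem_sdiff.mp (hsub ha)).2)
    constructor
    · constructor
      · exact union_subset (fun a ha => (mem_sdiff.mp (hsub ha)).1) hUT
      · rw [card_union_of_disjoint hdisj, hcard]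
        omega
    · exact subset_union_right
  · intro S hS
    simp only [mem_coe, mem_filter] at hS
    exact sdiff_union_of_subset hS.2
  · intro S hS
    simp only [mem_coe, mem_powersetCard, mem_sdiff] at hS
    beta_reduce
    rw [union_sdiff_right, sdiff_eq_self_of_disjoint]
    rw [Finset.disjoint_left]; intro a ha; exact ((mem_sdiff.mp (hS.1 ha)).2)

lemma sum_powersetCard_single {α : Type*} [DecidableEq α] (T : Finset α) (m : ℕ)
    (hm : 1 ≤ m) (f : α → ℝ) :
    ∑ S ∈ T.powersetCard m, ∑ i ∈ S, f i
      = ((T.card - 1).choose (m - 1) : ℝ) * ∑ i ∈ T, f i := by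
  have step : ∀ S ∈ T.powersetCard m, ∑ i ∈ S, f i
      = ∑ i ∈ T, if i ∈ S then f i else 0 := by
    intro S hS
    rw [Finset.sum_ite_mem, Finset.inter_eq_right.mpr (Finset.mem_powersetCard.mp hS).1]
  rw [Finset.sum_congr rfl step, Finset.sum_comm]
  rw [Finset.mul_sum]
  refine Finset.sum_congr rfl fun i hi => ?_
  rw [Finset.sum_ite, Finset.sum_const_zero, add_zero, Finset.sum_const, nsmul_eq_mul]
  congr 1
  have : (T.powersetCard m).filter (fun S => i ∈ S)
      = (T.powersetCard m).filter (fun S => {i} ⊆ S) := by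
    simp [Finset.singleton_subset_iff]
  rw [this, filter_superset_card (Finset.singleton_subset_iff.mpr hi)
    (by simpa using hm)]
  simp

lemma sum_powersetCard_pair {α : Type*} [DecidableEq α] (T : Finset α) (m : ℕ)
    (hm : 2 ≤ m) (f : α → α → ℝ) :
    ∑ S ∈ T.powersetCard m, ∑ i ∈ S, ∑ j ∈ S.erase i, f i j
      = ((T.card - 2).choose (m - 2) : ℝ) * ∑ i ∈ T, ∑ j ∈ T.erase i, f i j := by
  have step : ∀ S ∈ T.powersetCard m, ∑ i ∈ S, ∑ j ∈ S.erase i, f i j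
      = ∑ i ∈ T, ∑ j ∈ T.erase i, if i ∈ S ∧ j ∈ S then f i j else 0 := by
    intro S hS
    have hST := (Finset.mem_powersetCard.mp hS).1
    have h1 : ∀ i, (if i ∈ S then (∑ j ∈ S.erase i, f i j) else 0)
        = ∑ j ∈ T.erase i, if i ∈ S ∧ j ∈ S then f i j else 0 := by
      intro i
      by_cases hiS : i ∈ S
      · simp only [hiS, if_true, true_and]
        rw [Finset.sum_ite_mem]
        congr 1
        rw [Finset.erase_inter, Finset.inter_eq_right.mpr hST]
      · simp [hiS]
    calc ∑ i ∈ S, ∑ j ∈ S.erase i, f i j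
        = ∑ i ∈ T, if i ∈ S then (∑ j ∈ S.erase i, f i j) else 0 := by
          rw [Finset.sum_ite_mem, Finset.inter_eq_right.mpr hST]
      _ = _ := Finset.sum_congr rfl fun i _ => h1 i
  rw [Finset.sum_congr rfl step, Finset.sum_comm]
  rw [Finset.mul_sum]
  refine Finset.sum_congr rfl fun i hi => ?_
  rw [Finset.sum_comm, Finset.mul_sum]
  refine Finset.sum_congr rfl fun j hj => ?_
  rw [Finset.sum_ite, Finset.sum_const_zero, add_zero, Finset.sum_const, nsmul_eq_mul]
  congr 1
  have hji : j ≠ i := (Finset.mem_erase.mp hj).1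
  have hjT : j ∈ T := (Finset.mem_erase.mp hj).2
  have : (T.powersetCard m).filter (fun S => i ∈ S ∧ j ∈ S)
      = (T.powersetCard m).filter (fun S => {i, j} ⊆ S) := by
    simp [Finset.insert_subset_iff, Finset.singleton_subset_iff]
  rw [this, filter_superset_card (Finset.insert_subset hi (Finset.singleton_subset_iff.mpr hjT))]
  · rw [Finset.card_insert_of_notMem (by simp [hji.symm]), Finset.card_singleton]
  · rw [Finset.card_insert_of_notMem (by simp [hji.symm]), Finset.card_singleton]
    exact hm

noncomputable def gram {n N : ℕ} (Φ : Matrix (Fin n) (Fin N) ℂ) (i j : Fin N) : ℂ :=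
  ∑ a, Φ a i * (starRingEnd ℂ) (Φ a j)

noncomputable def qf {n N : ℕ} (Φ : Matrix (Fin n) (Fin N) ℂ) (x : Fin N → ℂ)
    (i j : Fin N) : ℝ :=
  (x i * (starRingEnd ℂ) (x j) * gram Φ i j).re

lemma qf_zero_left {n N : ℕ} (Φ : Matrix (Fin n) (Fin N) ℂ) {x : Fin N → ℂ} {i j : Fin N}
    (h : x i = 0) : qf Φ x i j = 0 := by simp [qf, h]

lemma qf_zero_right {n N : ℕ} (Φ : Matrix (Fin n) (Fin N) ℂ) {x : Fin N → ℂ} {i j : Fin N}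
    (h : x j = 0) : qf Φ x i j = 0 := by simp [qf, h]

lemma qf_diag {n N : ℕ} {Φ : Matrix (Fin n) (Fin N) ℂ}
    (hunit : ∀ j, ∑ a, ‖Φ a j‖ ^ 2 = 1) (x : Fin N → ℂ) (i : Fin N) :
    qf Φ x i i = ‖x i‖ ^ 2 := by
  have hg : gram Φ i i = 1 := by
    have : gram Φ i i = ((∑ a, ‖Φ a i‖ ^ 2 : ℝ) : ℂ) := by
      rw [Complex.ofReal_sum]
      refine Finset.sum_congr rfl fun a _ => ?_
      rw [Complex.mul_conj]
      norm_cast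
      simp [Complex.normSq_eq_norm_sq]
    rw [this, hunit i]
    norm_num
  rw [qf, hg, mul_one, Complex.mul_conj]
  norm_cast
  simp [Complex.normSq_eq_norm_sq]

lemma normSq_expand' {n N : ℕ} (Φ : Matrix (Fin n) (Fin N) ℂ) (x : Fin N → ℂ) :
    ∑ a, ‖Φ.mulVec x a‖ ^ 2 = ∑ i, ∑ j, qf Φ x i j := by
  have h1 : ∀ z : ℂ, ‖z‖ ^ 2 = (z * (starRingEnd ℂ) z).re := by
    intro z
    rw [Complex.mul_conj]
    simp [Complex.normSq_eq_norm_sq, ← Complex.ofReal_pow]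
  have key : (∑ a, (Φ.mulVec x a) * (starRingEnd ℂ) (Φ.mulVec x a))
      = ∑ i, ∑ j, (x i * (starRingEnd ℂ) (x j) * gram Φ i j) := by
    simp only [Matrix.mulVec, dotProduct, map_sum, Finset.sum_mul, Finset.mul_sum,
      gram]
    conv_rhs => rw [Finset.sum_comm]
    rw [Finset.sum_comm]
    refine Finset.sum_congr rfl fun i _ => ?_
    rw [Finset.sum_comm]
    refine Finset.sum_congr rfl fun j _ => ?_
    refine Finset.sum_congr rfl fun a _ => ?_
    simp only [map_mul]
    ring
  calc ∑ a, ‖Φ.mulVec x a‖ ^ 2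
      = ∑ a, ((Φ.mulVec x a) * (starRingEnd ℂ) (Φ.mulVec x a)).re :=
        Finset.sum_congr rfl fun a _ => h1 _
    _ = (∑ a, (Φ.mulVec x a) * (starRingEnd ℂ) (Φ.mulVec x a)).re := by
        rw [Complex.re_sum]
    _ = _ := by rw [key]; simp [qf, Complex.re_sum]

/-- Decomposition of the quadratic form for a vector supported in `W`. -/
lemma Q_decomp {n N : ℕ} {Φ : Matrix (Fin n) (Fin N) ℂ}
    (hunit : ∀ j, ∑ a, ‖Φ a j‖ ^ 2 = 1) (y : Fin N → ℂ) (W : Finset (Fin N))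
    (hy : ∀ i ∉ W, y i = 0) :
    ∑ a, ‖Φ.mulVec y a‖ ^ 2
      = ∑ i ∈ W, ‖y i‖ ^ 2 + ∑ i ∈ W, ∑ j ∈ W.erase i, qf Φ y i j := by
  rw [normSq_expand']
  have h1 : ∑ i, ∑ j, qf Φ y i j = ∑ i ∈ W, ∑ j ∈ W, qf Φ y i j := by
    rw [← Finset.sum_subset (Finset.subset_univ W)
      (fun i _ hi => by
        exact Finset.sum_eq_zero fun j _ => qf_zero_left Φ (hy i hi))]
    refine Finset.sum_congr rfl fun i _ => ?_
    rw [← Finset.sum_subset (Finset.subset_univ W)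
      (fun j _ hj => qf_zero_right Φ (hy j hj))]
  rw [h1, ← Finset.sum_add_distrib]
  refine Finset.sum_congr rfl fun i hi => ?_
  rw [← qf_diag hunit y i, Finset.add_sum_erase _ _ hi]

/-- If Φ has unit columns and satisfies the RIP of order m (m ≥ 2) with
parameter ε, then for every k ≥ m it satisfies the RIP of order k with parameter
δ = ε(k-1)/(m-1). -/
theorem rip_order_increase {n N m k : ℕ} (Φ : Matrix (Fin n) (Fin N) ℂ) (ε : ℝ)
    (hunit : ∀ j, ∑ a, ‖Φ a j‖ ^ 2 = 1)
    (hm : 2 ≤ m) (hRIP : RIP Φ m ε) (hmk : m ≤ k) :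
    RIP Φ k (ε * ((k : ℝ) - 1) / ((m : ℝ) - 1)) := by
  intro x hx
  set δ := ε * ((k : ℝ) - 1) / ((m : ℝ) - 1) with hδ
  by_cases hx0 : x = 0
  · subst hx0
    simp [Matrix.mulVec]
  -- ε is nonnegative
  have hε : 0 ≤ ε := by
    obtain ⟨i0, hi0⟩ : ∃ i0, x i0 ≠ 0 := by
      by_contra h
      push_neg at h
      exact hx0 (funext h)
    set e : Fin N → ℂ := fun i => if i = i0 then 1 else 0 with he
    have hsupp : (Finset.univ.filter fun i => e i ≠ 0).card ≤ m := by
      have : (Finset.univ.filter fun i => e i ≠ 0) = {i0} := by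
        ext i
        simp only [mem_filter, mem_univ, true_and, mem_singleton, he]
        by_cases h : i = i0 <;> simp [h]
      rw [this, Finset.card_singleton]
      omega
    obtain ⟨h1, _⟩ := hRIP e hsupp
    have hse : ∑ i, ‖e i‖ ^ 2 = 1 := by
      have h : ∀ i : Fin N, ‖e i‖ ^ 2 = if i = i0 then (1:ℝ) else 0 := by
        intro i; rw [he]; dsimp only; split <;> simp
      rw [Finset.sum_congr rfl fun i _ => h i]
      simp
    have hQe : ∑ a, ‖Φ.mulVec e a‖ ^ 2 = 1 := by
      have : ∀ a, Φ.mulVec e a = Φ a i0 := by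
        intro a
        simp [Matrix.mulVec, dotProduct, he, mul_ite, Finset.sum_ite_eq']
      simp only [this]
      exact hunit i0
    rw [hse, hQe, mul_one] at h1
    linarith
  -- basic real inequalities
  have hm1 : (1 : ℝ) ≤ (m : ℝ) - 1 := by
    have : (2 : ℝ) ≤ (m : ℝ) := by exact_mod_cast hm
    linarith
  have hk1 : (m : ℝ) - 1 ≤ (k : ℝ) - 1 := by
    have : (m : ℝ) ≤ (k : ℝ) := by exact_mod_cast hmk
    linarith
  have hεδ : ε ≤ δ := by
    rw [hδ, mul_div_assoc]
    have h1 : (1:ℝ) ≤ ((k:ℝ)-1)/((m:ℝ)-1) := (one_le_div (by linarith)).mpr (by linarith)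
    nlinarith
  -- the support and decomposition
  set T := Finset.univ.filter (fun i => x i ≠ 0) with hT
  have hxT : ∀ i ∉ T, x i = 0 := by
    intro i hi
    by_contra h
    exact hi (Finset.mem_filter.mpr ⟨Finset.mem_univ i, h⟩)
  have hsfull : ∑ i, ‖x i‖ ^ 2 = ∑ i ∈ T, ‖x i‖ ^ 2 := by
    rw [← Finset.sum_subset (Finset.subset_univ T)
      (fun i _ hi => by rw [hxT i hi]; simp)]
  have hQx := Q_decomp hunit x T hxT
  set s := ∑ i ∈ T, ‖x i‖ ^ 2 with hs
  set D := ∑ i ∈ T, ∑ j ∈ T.erase i, qf Φ x i j with hD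
  have hs0' : 0 ≤ s := Finset.sum_nonneg fun i _ => sq_nonneg _
  suffices habs : |D| ≤ δ * s by
    obtain ⟨hab1, hab2⟩ := abs_le.mp habs
    rw [hsfull, hQx]
    constructor <;> linarith
  rcases le_total T.card m with htm | hmt
  · -- small support: apply RIP of order m directly
    obtain ⟨h1, h2⟩ := hRIP x htm
    rw [hsfull] at h1 h2
    rw [hQx] at h1 h2
    rw [abs_le]
    have hprod : 0 ≤ (δ - ε) * s := mul_nonneg (by linarith) hs0'
    constructor <;> nlinarith
  · -- large support: averaging over m-subsets
    have hT2 : 2 ≤ T.card := le_trans hm hmt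
    have hSbound : ∀ S ∈ T.powersetCard m,
        |∑ i ∈ S, ∑ j ∈ S.erase i, qf Φ x i j| ≤ ε * ∑ i ∈ S, ‖x i‖ ^ 2 := by
      intro S hS
      obtain ⟨hST, hScard⟩ := Finset.mem_powersetCard.mp hS
      set xS : Fin N → ℂ := fun i => if i ∈ S then x i else 0 with hxS
      have hzero : ∀ i ∉ S, xS i = 0 := fun i hi => by simp [hxS, hi]
      have hsupp : (Finset.univ.filter fun i => xS i ≠ 0).card ≤ m := by
        refine le_trans (Finset.card_le_card ?_) (le_of_eq hScard)
        intro i hi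
        simp only [Finset.mem_filter] at hi
        by_contra h
        exact hi.2 (hzero i h)
      obtain ⟨h1, h2⟩ := hRIP xS hsupp
      have hseq : ∑ i, ‖xS i‖ ^ 2 = ∑ i ∈ S, ‖x i‖ ^ 2 := by
        rw [← Finset.sum_subset (Finset.subset_univ S)
          (fun i _ hi => by rw [hzero i hi]; simp)]
        refine Finset.sum_congr rfl fun i hi => by rw [hxS]; simp [hi]
      have hQS : ∑ a, ‖Φ.mulVec xS a‖ ^ 2
          = ∑ i ∈ S, ‖x i‖ ^ 2 + ∑ i ∈ S, ∑ j ∈ S.erase i, qf Φ x i j := by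
        rw [Q_decomp hunit xS S hzero]
        congr 1
        · refine Finset.sum_congr rfl fun i hi => by rw [hxS]; simp [hi]
        · refine Finset.sum_congr rfl fun i hi => Finset.sum_congr rfl fun j hj => ?_
          have hjS : j ∈ S := Finset.mem_of_mem_erase hj
          rw [hxS]
          simp [qf, hi, hjS]
      rw [hseq] at h1 h2
      rw [hQS] at h1 h2
      rw [abs_le]
      constructor <;> linarith
    set c2 := (((T.card - 2).choose (m - 2) : ℕ) : ℝ) with hc2
    set c1 := (((T.card - 1).choose (m - 1) : ℕ) : ℝ) with hc1
    have hc2pos : 0 < c2 := by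
      rw [hc2]
      exact_mod_cast Nat.choose_pos (by omega)
    have hsum2 : ∑ S ∈ T.powersetCard m, ∑ i ∈ S, ∑ j ∈ S.erase i, qf Φ x i j
        = c2 * D := sum_powersetCard_pair T m hm _
    have hsum1 : ∑ S ∈ T.powersetCard m, ∑ i ∈ S, ‖x i‖ ^ 2 = c1 * s :=
      sum_powersetCard_single T m (by omega) _
    have hDS : c2 * |D| ≤ ε * (c1 * s) := by
      rw [← abs_of_pos hc2pos, ← abs_mul, ← hsum2]
      calc |∑ S ∈ T.powersetCard m, ∑ i ∈ S, ∑ j ∈ S.erase i, qf Φ x i j|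
          ≤ ∑ S ∈ T.powersetCard m, |∑ i ∈ S, ∑ j ∈ S.erase i, qf Φ x i j| :=
            Finset.abs_sum_le_sum_abs _ _
        _ ≤ ∑ S ∈ T.powersetCard m, ε * ∑ i ∈ S, ‖x i‖ ^ 2 :=
            Finset.sum_le_sum hSbound
        _ = ε * (c1 * s) := by rw [← Finset.mul_sum, hsum1]
    have hnat : (T.card - 1) * (T.card - 2).choose (m - 2)
        = (T.card - 1).choose (m - 1) * (m - 1) := by
      have h := Nat.add_one_mul_choose_eq (T.card - 2) (m - 2)
      have e1 : T.card - 2 + 1 = T.card - 1 := by omega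
      have e2 : m - 2 + 1 = m - 1 := by omega
      rw [e1, e2] at h
      exact h
    have e1 : ((T.card - 1 : ℕ) : ℝ) = (T.card : ℝ) - 1 := by
      rw [Nat.cast_sub (by omega)]; norm_num
    have e2 : ((m - 1 : ℕ) : ℝ) = (m : ℝ) - 1 := by
      rw [Nat.cast_sub (by omega)]; norm_num
    have hreal : ((T.card : ℝ) - 1) * c2 = c1 * ((m : ℝ) - 1) := by
      rw [← e1, ← e2, hc1, hc2]
      exact_mod_cast hnat
    have htk : (T.card : ℝ) - 1 ≤ (k : ℝ) - 1 := by
      have : T.card ≤ k := hx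
      have : (T.card : ℝ) ≤ (k : ℝ) := by exact_mod_cast this
      linarith
    have h3 : ((m : ℝ) - 1) * |D| ≤ ε * ((k : ℝ) - 1) * s := by
      have h4 : c2 * (((m : ℝ) - 1) * |D|) ≤ c2 * (ε * ((k : ℝ) - 1) * s) := by
        calc c2 * (((m : ℝ) - 1) * |D|) = ((m : ℝ) - 1) * (c2 * |D|) := by ring
          _ ≤ ((m : ℝ) - 1) * (ε * (c1 * s)) := by nlinarith
          _ = (c1 * ((m : ℝ) - 1)) * (ε * s) := by ring
          _ = (((T.card : ℝ) - 1) * c2) * (ε * s) := by rw [hreal]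
          _ ≤ (((k : ℝ) - 1) * c2) * (ε * s) := by
              have hεs : 0 ≤ ε * s := mul_nonneg hε hs0'
              exact mul_le_mul_of_nonneg_right
                (mul_le_mul_of_nonneg_right htk hc2pos.le) hεs
          _ = c2 * (ε * ((k : ℝ) - 1) * s) := by ring
      exact le_of_mul_le_mul_left h4 hc2pos
    have hm0 : (0:ℝ) < (m : ℝ) - 1 := by linarith
    have h5 : |D| ≤ ε * ((k : ℝ) - 1) * s / ((m : ℝ) - 1) := by
      rw [le_div_iff₀ hm0, mul_comm]
      exact h3
    have h6 : ε * ((k : ℝ) - 1) * s / ((m : ℝ) - 1) = δ * s := by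
      rw [hδ]; ring
    rw [← h6]
    exact h5
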